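/- Let f, g: ℝ² → ℝ be continuous functions admitting distributional intrinsic gradients θ_f, θ_g ∈ L∞_loc(ℝ²) respectively. Let U ⊆ ℝ² be a bounded open set and suppose f − g has compact support contained in U. Then ∫_U θ_f dμ = ∫_U θ_g dμ. -/

import Mathlib

open MeasureTheory Set
open Metric Filter Manifold

/-- Partial derivative in the `x` (first) direction. -/
noncomputable def pdx (g : ℝ × ℝ → ℝ) (p : ℝ × ℝ) : ℝ := fderiv ℝ g p (1, 0)

/-- Partial derivative in the `z` (second) direction. -/
noncomputable def pdz (g : ℝ × ℝ → ℝ) (p : ℝ × ℝ) : ℝ := fderiv ℝ g p (0, 1)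

/-- `θ` is the distributional intrinsic gradient of `f`: for every C¹ compactly supported
test function `ψ`, `∫ θ·ψ dμ = ∫ (−f·∂_xψ + (f²/2)·∂_zψ) dμ`. -/
def IsDistribIGrad (f θ : ℝ × ℝ → ℝ) : Prop :=
  ∀ ψ : ℝ × ℝ → ℝ, ContDiff ℝ 1 ψ → HasCompactSupport ψ →
    ∫ p, θ p * ψ p = ∫ p, (-(f p) * pdx ψ p + (f p) ^ 2 / 2 * pdz ψ p)

/-- `θ` is locally essentially bounded (`θ ∈ L∞_loc`). -/
def LocEssBdd (θ : ℝ × ℝ → ℝ) : Prop :=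
  ∀ K : Set (ℝ × ℝ), IsCompact K → MemLp θ ⊤ (volume.restrict K)

/-- if continuous `f, g` admit distributional intrinsic gradients
`θ_f, θ_g ∈ L∞_loc`, `U` is bounded open, and `f − g` has compact support contained
in `U`, then `∫_U θ_f dμ = ∫_U θ_g dμ`. -/
theorem stmt7 (f g θf θg : ℝ × ℝ → ℝ)
    (hfc : Continuous f) (hgc : Continuous g)
    (hθf : IsDistribIGrad f θf) (hθg : IsDistribIGrad g θg)
    (hθfb : LocEssBdd θf) (hθgb : LocEssBdd θg)
    (U : Set (ℝ × ℝ)) (hUo : IsOpen U) (hUb : Bornology.IsBounded U)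
    (hsupp : HasCompactSupport (f - g)) (hsuppU : tsupport (f - g) ⊆ U) :
    ∫ p in U, θf p = ∫ p in U, θg p := by
  classical
  -- a compact set K' with tsupport (f-g) ⊆ interior K' ⊆ K' ⊆ U
  obtain ⟨K', hK'c, hKK', hK'U⟩ := exists_compact_between hsupp hUo hsuppU
  -- closed approximating sets
  set A : ℕ → Set (ℝ × ℝ) := fun n => {p | 1 / (n + 1 : ℝ) ≤ infDist p Uᶜ} with hA
  have hAclosed : ∀ n, IsClosed (A n) := fun n =>
    isClosed_le continuous_const (continuous_infDist_pt _)
  have hAU : ∀ n, A n ⊆ U := by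
    intro n p hp
    by_contra hpU
    have h0 : infDist p Uᶜ = 0 := infDist_zero_of_mem hpU
    have : (0:ℝ) < 1 / (n + 1 : ℝ) := by positivity
    rw [hA] at hp
    simp only [mem_setOf_eq, h0] at hp
    linarith
  set t : ℕ → Set (ℝ × ℝ) := fun n => K' ∪ A n with ht
  have htclosed : ∀ n, IsClosed (t n) := fun n => hK'c.isClosed.union (hAclosed n)
  have htU : ∀ n, t n ⊆ U := fun n => union_subset hK'U (hAU n)
  have hdisj : ∀ n, Disjoint Uᶜ (t n) := fun n =>
    disjoint_compl_left_iff_subset.mpr (htU n)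
  -- test functions
  have hpsi : ∀ n : ℕ, ∃ ψ : ℝ × ℝ → ℝ, ContDiff ℝ 1 ψ ∧ EqOn ψ 0 Uᶜ ∧ EqOn ψ 1 (t n) ∧
      ∀ x, ψ x ∈ Icc (0:ℝ) 1 := by
    intro n
    obtain ⟨F, h0, h1, h01⟩ :=
      exists_contMDiffMap_zero_one_of_isClosed 𝓘(ℝ, ℝ×ℝ) (n := (⊤ : ℕ∞)) hUo.isClosed_compl (htclosed n) (hdisj n)
    exact ⟨F, (contMDiff_iff_contDiff.mp F.contMDiff).of_le (by exact_mod_cast le_top), h0, h1, h01⟩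
  choose ψ hψc hψ0 hψ1 hψ01 using hpsi
  -- closure U is compact
  have hclU : IsCompact (closure U) :=
    Metric.isCompact_of_isClosed_isBounded isClosed_closure hUb.closure
  -- each ψ n has compact support
  have hψsupp : ∀ n, Function.support (ψ n) ⊆ U := by
    intro n p hp
    by_contra hpU
    exact hp (hψ0 n hpU)
  have hψcs : ∀ n, HasCompactSupport (ψ n) := by
    intro n
    apply IsCompact.of_isClosed_subset hclU isClosed_closure
    exact closure_mono (hψsupp n)
  -- where f ≠ g, ψ n is locally 1, so derivatives vanish
  have hderiv : ∀ n p, f p ≠ g p → fderiv ℝ (ψ n) p = 0 := by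
    intro n p hne
    have hp : p ∈ tsupport (f - g) := by
      apply subset_tsupport
      simp only [Function.mem_support, Pi.sub_apply, sub_ne_zero]
      exact hne
    have hpK : p ∈ interior K' := hKK' hp
    have heq : ψ n =ᶠ[nhds p] fun _ => 1 := by
      filter_upwards [isOpen_interior.mem_nhds hpK] with q hq
      exact hψ1 n (Or.inl (interior_subset hq))
    rw [heq.fderiv_eq, fderiv_fun_const]
    rfl
  -- key: equal integrals against each ψ n
  have hkey : ∀ n, (∫ p, θf p * ψ n p) = ∫ p, θg p * ψ n p := by
    intro n
    rw [hθf (ψ n) (hψc n) (hψcs n), hθg (ψ n) (hψc n) (hψcs n)]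
    congr 1
    funext p
    by_cases hfg : f p = g p
    · rw [hfg]
    · have h := hderiv n p hfg
      simp [pdx, pdz, h]
  -- integrability of θf, θg on U
  haveI : IsFiniteMeasure (volume.restrict (closure U)) := by
    constructor
    rw [Measure.restrict_apply_univ]
    exact hUb.closure.measure_lt_top
  have hint : ∀ θ : ℝ × ℝ → ℝ, LocEssBdd θ → Integrable θ (volume.restrict U) := by
    intro θ hb
    have h1 : MemLp θ 1 (volume.restrict (closure U)) :=
      (hb (closure U) hclU).mono_exponent le_top
    exact (memLp_one_iff_integrable.mp h1).mono_measure
      (Measure.restrict_mono subset_closure le_rfl)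
  -- a.e. convergence ψ n → 1 on U
  have hconv : ∀ p ∈ U, ∀ᶠ n in atTop, ψ n p = 1 := by
    intro p hp
    have hUc : (Uᶜ : Set (ℝ × ℝ)).Nonempty := by
      by_contra h
      rw [not_nonempty_iff_eq_empty, compl_empty_iff] at h
      rw [h] at hUb
      exact absurd hUb (NormedSpace.unbounded_univ ℝ (ℝ × ℝ))
    have hd : 0 < infDist p Uᶜ :=
      (hUo.isClosed_compl.notMem_iff_infDist_pos hUc).mp (by simpa using hp)
    obtain ⟨N, hN⟩ := exists_nat_one_div_lt hd
    filter_upwards [eventually_ge_atTop N] with n hn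
    apply hψ1 n
    right
    show 1 / (n + 1 : ℝ) ≤ infDist p Uᶜ
    have : 1 / (n + 1 : ℝ) ≤ 1 / (N + 1 : ℝ) := by
      apply one_div_le_one_div_of_le (by positivity)
      have : (N:ℝ) ≤ n := Nat.cast_le.mpr hn
      linarith
    linarith [hN.le]
  -- dominated convergence
  have htend : ∀ θ : ℝ × ℝ → ℝ, Integrable θ (volume.restrict U) →
      Tendsto (fun n => ∫ p in U, θ p * ψ n p) atTop (nhds (∫ p in U, θ p)) := by
    intro θ hintθ
    apply tendsto_integral_of_dominated_convergence (fun p => |θ p|)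
    · exact fun n => hintθ.aestronglyMeasurable.mul (hψc n).continuous.aestronglyMeasurable
    · exact hintθ.abs
    · intro n
      filter_upwards with p
      have h01 := hψ01 n p
      rw [Real.norm_eq_abs, abs_mul]
      calc |θ p| * |ψ n p| ≤ |θ p| * 1 := by
            apply mul_le_mul_of_nonneg_left _ (abs_nonneg _)
            rw [abs_le]; exact ⟨by linarith [h01.1], h01.2⟩
        _ = |θ p| := mul_one _
    · filter_upwards [ae_restrict_mem hUo.measurableSet] with p hp
      apply Tendsto.congr' _ tendsto_const_nhds
      filter_upwards [hconv p hp] with n hn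
      rw [hn, mul_one]
  -- set integrals equal full integrals
  have hset : ∀ (θ : ℝ × ℝ → ℝ) n, (∫ p in U, θ p * ψ n p) = ∫ p, θ p * ψ n p := by
    intro θ n
    apply setIntegral_eq_integral_of_forall_compl_eq_zero
    intro p hp
    have h := hψ0 n hp
    simp only [Pi.zero_apply] at h
    rw [h, mul_zero]
  have hif := hint θf hθfb
  have hig := hint θg hθgb
  have h1 := htend θf hif
  have h2 := htend θg hig
  have h12 : (fun n => ∫ p in U, θf p * ψ n p) = fun n => ∫ p in U, θg p * ψ n p := by
    funext n
    rw [hset θf n, hset θg n, hkey n]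
  rw [h12] at h1
  exact tendsto_nhds_unique h1 h2
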